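/- arXiv:1602.08654 — 4 statements merged into one kernel-verified Lean document; each statement's English description precedes it below -/
import Mathlib

section
/- Let q:(0,1)→(0,∞) be non-decreasing on (0,δ] and non-increasing on [1−δ,1) for some δ∈(0,1/2), and suppose inf_{φ≤τ≤1−φ} q(τ) > 0 for every φ∈(0,1/2). If there exists c>0 such that I(q,c) = ∫₀¹ (t(1−t))⁻¹ exp(−c·q(t)²/(t(1−t))) dt < ∞, then sup_{0<τ<1} √(τ(1−τ))/q(τ) < ∞. -/
open MeasureTheory Set

/-- Auxiliary lemma: the endpoint estimate near `0`. -/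
private lemma weight_aux (q : ℝ → ℝ) (c δ : ℝ) (hc : 0 < c) (hδ0 : 0 < δ) (hδ2 : δ < 1/2)
    (hq_pos : ∀ t ∈ Ioo (0:ℝ) 1, 0 < q t)
    (hmono : MonotoneOn q (Ioc 0 δ))
    (hI : IntegrableOn
      (fun t => (t * (1 - t))⁻¹ * Real.exp (-(c * (q t)^2) / (t * (1 - t))))
      (Ioo (0:ℝ) 1) volume) :
    ∃ a, 0 < a ∧ a ≤ δ ∧ ∀ τ ∈ Ioo (0:ℝ) a,
      Real.sqrt (τ * (1 - τ)) / q τ ≤ Real.sqrt (4 * c / Real.log 2) := by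
  set f : ℝ → ℝ := fun t => (t * (1 - t))⁻¹ * Real.exp (-(c * (q t)^2) / (t * (1 - t)))
    with hf_def
  have hf_nonneg : ∀ t ∈ Ioo (0:ℝ) 1, 0 ≤ f t := by
    intro t ht
    have h1 : 0 < t * (1 - t) := mul_pos ht.1 (by linarith [ht.2])
    exact mul_nonneg (inv_nonneg.2 h1.le) (Real.exp_nonneg _)
  -- Step 1: find a small `a ≤ δ` with small tail integral.
  have hTail : ∃ a, 0 < a ∧ a ≤ δ ∧ (∫ t in Ioo 0 a, f t) < 1/4 := by
    set s : ℕ → Set ℝ := fun n => Ioo 0 (δ * (1/2)^n) with hs_def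
    have hsm : ∀ n, MeasurableSet (s n) := fun n => measurableSet_Ioo
    have hanti : Antitone s := by
      intro n m h
      exact Ioo_subset_Ioo le_rfl
        (mul_le_mul_of_nonneg_left (pow_le_pow_of_le_one (by norm_num) (by norm_num) h) hδ0.le)
    have hsub : ∀ n, s n ⊆ Ioo 0 1 := by
      intro n x hx
      refine ⟨hx.1, lt_of_lt_of_le hx.2 ?_⟩
      calc δ * (1/2)^n ≤ δ * 1 := by
            exact mul_le_mul_of_nonneg_left (pow_le_one₀ (by norm_num) (by norm_num)) hδ0.le
        _ ≤ 1 := by linarith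
    have hfi : ∃ i, IntegrableOn f (s i) volume := ⟨0, hI.mono_set (hsub 0)⟩
    have hinter : ⋂ n, s n = (∅ : Set ℝ) := by
      ext x
      simp only [mem_iInter, mem_Ioo, mem_empty_iff_false, iff_false, not_forall]
      by_cases hx : 0 < x
      · obtain ⟨n, hn⟩ := exists_pow_lt_of_lt_one (div_pos hx hδ0) (by norm_num : (1/2:ℝ) < 1)
        refine ⟨n, fun h => absurd h.2 (not_lt.2 ?_)⟩
        calc δ * (1/2)^n ≤ δ * (x/δ) := mul_le_mul_of_nonneg_left hn.le hδ0.le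
          _ = x := by field_simp
      · exact ⟨0, fun h => hx h.1⟩
    have htendsto := tendsto_setIntegral_of_antitone hsm hanti hfi
    rw [hinter] at htendsto
    simp only [Measure.restrict_empty, integral_zero_measure] at htendsto
    have := htendsto.eventually_lt_const (by norm_num : (0:ℝ) < 1/4)
    obtain ⟨n, hn⟩ := this.exists
    exact ⟨δ * (1/2)^n, mul_pos hδ0 (by positivity),
      by nlinarith [pow_le_one₀ (by norm_num : (0:ℝ) ≤ 1/2) (by norm_num : (1/2:ℝ) ≤ 1) (n := n)],
      hn⟩
  obtain ⟨a, ha0, haδ, hTail⟩ := hTail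
  refine ⟨a, ha0, haδ, ?_⟩
  rintro τ ⟨hτ0, hτa⟩
  have hτδ : τ ≤ δ := hτa.le.trans haδ
  have hτ2 : τ < 1/2 := lt_of_le_of_lt hτδ hδ2
  have hτ1 : τ < 1 := by linarith
  have hqτ : 0 < q τ := hq_pos τ ⟨hτ0, hτ1⟩
  set J : Set ℝ := Ioc (τ/2) τ with hJ_def
  have hJa : J ⊆ Ioo 0 a := fun x hx => ⟨by linarith [hx.1], lt_of_le_of_lt hx.2 hτa⟩
  have hJ1 : J ⊆ Ioo 0 1 := fun x hx =>
    ⟨(hJa hx).1, lt_of_lt_of_le (hJa hx).2 (by linarith)⟩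
  -- pointwise lower bound on `J`
  have key : ∀ t ∈ J, τ⁻¹ * Real.exp (-(4 * c * (q τ)^2) / τ) ≤ f t := by
    intro t ht
    have ht0 : 0 < t := lt_trans (by linarith : (0:ℝ) < τ/2) ht.1
    have ht1 : t < 1 := by linarith [ht.2]
    have htt : 0 < t * (1 - t) := mul_pos ht0 (by linarith)
    have h1 : t * (1 - t) ≤ τ :=
      le_trans (mul_le_of_le_one_right ht0.le (by linarith)) ht.2
    have hinv : τ⁻¹ ≤ (t * (1 - t))⁻¹ := by
      apply inv_anti₀ htt h1
    have hq : q t ≤ q τ := hmono ⟨ht0, ht.2.trans hτδ⟩ ⟨hτ0, hτδ⟩ ht.2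
    have hqt2 : (q t)^2 ≤ (q τ)^2 :=
      pow_le_pow_left₀ (hq_pos t ⟨ht0, ht1⟩).le hq 2
    have h2 : τ/4 ≤ t * (1 - t) := by nlinarith [ht.1, ht.2]
    have hexp : -(4 * c * (q τ)^2) / τ ≤ -(c * (q t)^2) / (t * (1 - t)) := by
      have hcqt : c * (q t)^2 / (t * (1 - t)) ≤ c * (q τ)^2 / (τ/4) := by
        apply div_le_div₀ (by positivity) (by nlinarith) (by linarith) h2
      have heq : c * (q τ)^2 / (τ/4) = 4 * c * (q τ)^2 / τ := by
        field_simp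
      rw [neg_div, neg_div]
      exact neg_le_neg (by linarith)
    exact mul_le_mul hinv (Real.exp_le_exp.2 hexp) (Real.exp_nonneg _)
      (inv_nonneg.2 htt.le)
  have hintJ : IntegrableOn f J volume := hI.mono_set hJ1
  have hvol : (volume J).toReal = τ/2 := by
    rw [hJ_def, Real.volume_Ioc, ENNReal.toReal_ofReal (by linarith)]; ring
  have hlow : τ⁻¹ * Real.exp (-(4 * c * (q τ)^2) / τ) * (volume J).toReal
      ≤ ∫ t in J, f t := by
    exact setIntegral_ge_of_const_le_real measurableSet_Ioc
      (measure_Ioc_lt_top).ne key hintJ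
  have hup : (∫ t in J, f t) ≤ ∫ t in Ioo 0 a, f t := by
    apply setIntegral_mono_set (hI.mono_set fun x hx => ⟨hx.1, by linarith [hx.2]⟩)
    · exact (ae_restrict_iff' measurableSet_Ioo).2 (Filter.Eventually.of_forall
        fun t ht => hf_nonneg t ⟨ht.1, by linarith [ht.2]⟩)
    · exact hJa.eventuallyLE
  rw [hvol] at hlow
  have hE : Real.exp (-(4 * c * (q τ)^2) / τ) < 1/2 := by
    have h3 : τ⁻¹ * Real.exp (-(4 * c * (q τ)^2) / τ) * (τ/2)
        = Real.exp (-(4 * c * (q τ)^2) / τ) / 2 := by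
      field_simp
    rw [h3] at hlow
    linarith
  have hlog : -(4 * c * (q τ)^2) / τ < Real.log (1/2) :=
    (Real.lt_log_iff_exp_lt (by norm_num)).2 hE
  rw [one_div, Real.log_inv] at hlog
  have hlog2 : 0 < Real.log 2 := Real.log_pos (by norm_num)
  have hlog' : Real.log 2 < 4 * c * (q τ)^2 / τ := by
    rw [neg_div] at hlog; linarith
  have hkey : τ * Real.log 2 < 4 * c * (q τ)^2 := by
    have := (lt_div_iff₀ hτ0).1 hlog'
    linarith
  have hrat : τ * (1 - τ) / (q τ)^2 ≤ 4 * c / Real.log 2 := by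
    have h4 : τ * (1 - τ) ≤ τ := mul_le_of_le_one_right hτ0.le (by linarith)
    have h5 : τ / (q τ)^2 ≤ 4 * c / Real.log 2 := by
      rw [div_le_div_iff₀ (by positivity) hlog2]
      nlinarith
    calc τ * (1 - τ) / (q τ)^2 ≤ τ / (q τ)^2 := by
          apply div_le_div_of_nonneg_right h4 (by positivity) |>.trans_eq rfl
      _ ≤ 4 * c / Real.log 2 := h5
  calc Real.sqrt (τ * (1 - τ)) / q τ
      = Real.sqrt (τ * (1 - τ) / (q τ)^2) := by
        rw [Real.sqrt_div (by nlinarith : (0:ℝ) ≤ τ * (1 - τ)), Real.sqrt_sq hqτ.le]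
    _ ≤ Real.sqrt (4 * c / Real.log 2) := Real.sqrt_le_sqrt hrat

/-- If the weight function `q : (0,1) → (0,∞)` is non-decreasing near 0, non-increasing
near 1, bounded below away from 0 on compact subintervals, and `I(q,c) < ∞` for some
`c > 0`, then `sup_{0<τ<1} √(τ(1-τ))/q(τ) < ∞`. -/
theorem weight_function_sup_finite (q : ℝ → ℝ)
    (hq_pos : ∀ t ∈ Ioo (0:ℝ) 1, 0 < q t)
    (hmono : ∃ δ ∈ Ioo (0:ℝ) (1/2),
      MonotoneOn q (Ioc 0 δ) ∧ AntitoneOn q (Ico (1 - δ) 1))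
    (hinf : ∀ φ ∈ Ioo (0:ℝ) (1/2), ∃ ε > 0, ∀ τ ∈ Icc φ (1 - φ), ε ≤ q τ)
    (hI : ∃ c > 0, IntegrableOn
      (fun t => (t * (1 - t))⁻¹ * Real.exp (-(c * (q t)^2) / (t * (1 - t))))
      (Ioo (0:ℝ) 1) volume) :
    ∃ M : ℝ, ∀ τ ∈ Ioo (0:ℝ) 1, Real.sqrt (τ * (1 - τ)) / q τ ≤ M := by
  obtain ⟨δ, ⟨hδ0, hδ2⟩, hmon0, hmon1⟩ := hmono
  obtain ⟨c, hc, hI⟩ := hI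
  -- bound near 0
  obtain ⟨a, ha0, haδ, hnear0⟩ := weight_aux q c δ hc hδ0 hδ2 hq_pos hmon0 hI
  -- reflected weight
  set p : ℝ → ℝ := fun t => q (1 - t) with hp_def
  have hp_pos : ∀ t ∈ Ioo (0:ℝ) 1, 0 < p t := fun t ht =>
    hq_pos _ ⟨by linarith [ht.2], by linarith [ht.1]⟩
  have hpmono : MonotoneOn p (Ioc 0 δ) := by
    intro s hs t ht hst
    exact hmon1 (show 1 - t ∈ Ico (1-δ) 1 from ⟨by linarith [ht.2], by linarith [ht.1]⟩)
      (show 1 - s ∈ Ico (1-δ) 1 from ⟨by linarith [hs.2], by linarith [hs.1]⟩)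
      (by linarith)
  have hpI : IntegrableOn
      (fun t => (t * (1 - t))⁻¹ * Real.exp (-(c * (p t)^2) / (t * (1 - t))))
      (Ioo (0:ℝ) 1) volume := by
    set F : ℝ → ℝ := fun t => (t * (1 - t))⁻¹ * Real.exp (-(c * (q t)^2) / (t * (1 - t)))
      with hF_def
    have h1 : IntegrableOn F (Ioc 0 1) volume :=
      hI.congr_set_ae Ioo_ae_eq_Ioc.symm
    have h2 : IntervalIntegrable F volume 0 1 :=
      (intervalIntegrable_iff_integrableOn_Ioc_of_le (by norm_num)).2 h1
    have h3 := (h2.comp_sub_left 1).symm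
    norm_num at h3
    have h4 : IntegrableOn (fun x => F (1 - x)) (Ioc 0 1) volume :=
      (intervalIntegrable_iff_integrableOn_Ioc_of_le (by norm_num)).1 h3
    have h5 : IntegrableOn (fun x => F (1 - x)) (Ioo 0 1) volume :=
      h4.congr_set_ae Ioo_ae_eq_Ioc
    apply h5.congr_fun _ measurableSet_Ioo
    intro x _
    simp only [hF_def, hp_def, sub_sub_cancel]
    rw [mul_comm (1 - x) x]
  obtain ⟨a', ha'0, ha'δ, hnear1⟩ := weight_aux p c δ hc hδ0 hδ2 hp_pos hpmono hpI
  -- middle bound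
  have hφ : min a a' ∈ Ioo (0:ℝ) (1/2) :=
    ⟨lt_min ha0 ha'0, lt_of_le_of_lt (min_le_left _ _) (lt_of_le_of_lt haδ hδ2)⟩
  obtain ⟨ε, hε, hmid⟩ := hinf (min a a') hφ
  refine ⟨max (Real.sqrt (4 * c / Real.log 2)) (1/ε), ?_⟩
  rintro τ ⟨hτ0, hτ1⟩
  by_cases hτa : τ < a
  · exact (hnear0 τ ⟨hτ0, hτa⟩).trans (le_max_left _ _)
  by_cases hτa' : 1 - a' < τ
  · have h := hnear1 (1 - τ) ⟨by linarith, by linarith⟩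
    simp only [hp_def, sub_sub_cancel] at h
    rw [mul_comm (1 - τ) τ] at h
    exact h.trans (le_max_left _ _)
  · push_neg at hτa hτa'
    have hmem : τ ∈ Icc (min a a') (1 - min a a') :=
      ⟨(min_le_left a a').trans hτa, hτa'.trans (by linarith [min_le_right a a'])⟩
    have hqε := hmid τ hmem
    have hs1 : Real.sqrt (τ * (1 - τ)) ≤ 1 := by
      have h := Real.sqrt_le_sqrt (show τ * (1 - τ) ≤ 1 by nlinarith)
      simpa using h
    have : Real.sqrt (τ * (1 - τ)) / q τ ≤ 1 / ε :=
      div_le_div₀ (by norm_num) hs1 hε hqε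
    exact this.trans (le_max_right _ _)
end

section
/- Let q:(0,1)→(0,∞) be non-decreasing on (0,δ] for some δ∈(0,1/2). If there exists c>0 such that I(q,c) = ∫₀¹ (t(1−t))⁻¹ exp(−c·q(t)²/(t(1−t))) dt < ∞, then q(t)/√t → +∞ as t → 0⁺. -/
open MeasureTheory Set Filter

/-- If the weight function `q : (0,1) → (0,∞)` is non-decreasing on `(0,δ]` for some
`δ ∈ (0,1/2)` and `I(q,c) < ∞` for some `c > 0`, then `q(t)/√t → +∞` as `t → 0⁺`. -/
theorem weight_function_tendsto_atTop (q : ℝ → ℝ)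
    (hq_pos : ∀ t ∈ Ioo (0:ℝ) 1, 0 < q t)
    (hmono : ∃ δ ∈ Ioo (0:ℝ) (1/2), MonotoneOn q (Ioc 0 δ))
    (hI : ∃ c > 0, IntegrableOn
      (fun t => (t * (1 - t))⁻¹ * Real.exp (-(c * (q t)^2) / (t * (1 - t))))
      (Ioo (0:ℝ) 1) volume) :
    Tendsto (fun t => q t / Real.sqrt t) (nhdsWithin 0 (Ioi 0)) atTop := by
  obtain ⟨δ, hδ, hmono⟩ := hmono
  obtain ⟨c, hc, hI⟩ := hI
  have hδpos : 0 < δ := hδ.1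
  have hδhalf : δ < 1/2 := hδ.2
  set f : ℝ → ℝ := fun t => (t * (1 - t))⁻¹ * Real.exp (-(c * (q t)^2) / (t * (1 - t)))
    with hfdef
  by_contra hcon
  rw [tendsto_atTop] at hcon
  push_neg at hcon
  obtain ⟨M0, hM0⟩ := hcon
  replace hM0 : ∃ᶠ x in nhdsWithin 0 (Ioi 0), ¬ (M0 ≤ q x / Real.sqrt x) :=
    hM0.mono fun x hx => not_le.mpr hx
  set M := max M0 1 with hM
  have hMpos : (0:ℝ) < M := lt_of_lt_of_le one_pos (le_max_right _ _)
  have hfreq : ∃ᶠ t in nhdsWithin 0 (Ioi 0), q t / Real.sqrt t < M := by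
    refine hM0.mono fun t ht => ?_
    push_neg at ht
    exact lt_of_lt_of_le ht (le_max_left _ _)
  have Hstep : ∀ a : ℝ, 0 < a → ∃ t, 0 < t ∧ t < a ∧ q t / Real.sqrt t < M := by
    intro a ha
    obtain ⟨t, ht1, ht2⟩ :=
      (hfreq.and_eventually (Ioo_mem_nhdsGT_of_mem (by simp [ha.le, ha] : (0:ℝ) ∈ Ico 0 a))).exists
    exact ⟨t, ht2.1, ht2.2, ht1⟩
  have Hstep' : ∀ a : ℝ, ∃ t, 0 < a → (0 < t ∧ t < a ∧ q t / Real.sqrt t < M) := by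
    intro a
    by_cases ha : 0 < a
    · obtain ⟨t, h⟩ := Hstep a ha; exact ⟨t, fun _ => h⟩
    · exact ⟨0, fun h => absurd h ha⟩
  choose F hF using Hstep'
  set T : ℕ → ℝ := fun n => Nat.rec (F δ) (fun _ t => F (t/2)) n with hTdef
  have hTs : ∀ n, T (n+1) = F (T n / 2) := fun n => rfl
  have key : ∀ n, 0 < T n ∧ T n ≤ δ ∧ q (T n) / Real.sqrt (T n) < M := by
    intro n
    induction n with
    | zero =>
      obtain ⟨h1, h2, h3⟩ := hF δ hδpos
      exact ⟨h1, h2.le, h3⟩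
    | succ n ih =>
      obtain ⟨h1, h2, h3⟩ := hF (T n / 2) (by linarith [ih.1])
      rw [hTs]
      exact ⟨h1, by nlinarith [ih.2.1], h3⟩
  have hhalf : ∀ n, T (n+1) < T n / 2 := by
    intro n
    rw [hTs]
    exact (hF (T n / 2) (by linarith [(key n).1])).2.1
  have hanti : StrictAnti T :=
    strictAnti_nat_of_succ_lt fun n => lt_of_lt_of_le (hhalf n) (by linarith [(key n).1])
  have hlt : ∀ m n : ℕ, m < n → T n < T m / 2 := fun m n h =>
    lt_of_le_of_lt (hanti.antitone h) (hhalf m)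
  -- the interval associated to each n
  set S : ℕ → Set ℝ := fun n => Ioc (T n / 2) (T n) with hSdef
  have hsub : ∀ n, S n ⊆ Ioo (0:ℝ) 1 := by
    intro n s hs
    have h1 := (key n).1
    have h2 := (key n).2.1
    exact ⟨by linarith [hs.1], by linarith [hs.2]⟩
  set ε : ℝ := Real.exp (-(4*c*M^2)) with hεdef
  have hεpos : 0 < ε := Real.exp_pos _
  -- per interval lower bound
  have key2 : ∀ n, ε * Real.log 2 ≤ ∫ s in S n, f s := by
    intro n
    obtain ⟨ht, htδ, htM⟩ := key n
    set t := T n with htdef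
    have hst : 0 < Real.sqrt t := Real.sqrt_pos.mpr ht
    have hqt : q t < M * Real.sqrt t := by
      have := mul_lt_mul_of_pos_right htM hst
      rwa [div_mul_cancel₀ _ hst.ne'] at this
    have hqt2 : (q t)^2 < M^2 * t := by
      have hq0 : 0 < q t := hq_pos t ⟨ht, by linarith⟩
      have : (q t)^2 < (M * Real.sqrt t)^2 := by nlinarith
      calc (q t)^2 < (M * Real.sqrt t)^2 := this
        _ = M^2 * t := by rw [mul_pow, Real.sq_sqrt ht.le]
    -- pointwise bound on the interval
    have hpt : ∀ s ∈ S n, ε * s⁻¹ ≤ f s := by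
      intro s hs
      have hs1 : t/2 < s := hs.1
      have hs2 : s ≤ t := hs.2
      have hs0 : 0 < s := by linarith
      have hs1' : s < 1/2 := by linarith
      have hprod : 0 < s * (1 - s) := by nlinarith
      have hqs0 : 0 < q s := hq_pos s ⟨hs0, by linarith⟩
      have hqsle : q s ≤ q t := hmono ⟨hs0, by linarith⟩ ⟨ht, htδ⟩ hs2
      have hqs2 : (q s)^2 < M^2 * t := by nlinarith
      have hprodge : t/4 ≤ s * (1 - s) := by nlinarith
      have hexp : ε ≤ Real.exp (-(c * (q s)^2) / (s * (1 - s))) := by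
        rw [hεdef]
        apply Real.exp_le_exp.mpr
        rw [le_div_iff₀ hprod]
        nlinarith [mul_lt_mul_of_pos_left hqs2 hc,
          mul_le_mul_of_nonneg_left hprodge (by positivity : (0:ℝ) ≤ 4*c*M^2)]
      have hinv : s⁻¹ ≤ (s * (1 - s))⁻¹ :=
        inv_anti₀ hprod (by nlinarith)
      calc ε * s⁻¹ ≤ Real.exp (-(c * (q s)^2) / (s * (1 - s))) * (s * (1 - s))⁻¹ := by
            apply mul_le_mul hexp hinv (inv_nonneg.mpr hs0.le) (Real.exp_pos _).le
        _ = f s := by rw [hfdef]; ring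
    -- integrability on the interval
    have hint1 : IntegrableOn f (S n) := hI.mono_set (hsub n)
    have hint2 : IntegrableOn (fun s => ε * s⁻¹) (S n) := by
      apply (ContinuousOn.integrableOn_Icc ?_).mono_set Ioc_subset_Icc_self
      apply continuousOn_const.mul
      apply ContinuousOn.inv₀ continuousOn_id
      exact fun x hx => ne_of_gt (lt_of_lt_of_le (by linarith : (0:ℝ) < t/2) hx.1)
    have hcalc : ∫ s in S n, ε * s⁻¹ = ε * Real.log 2 := by
      rw [hSdef]
      have hle : t/2 ≤ t := by linarith
      rw [← intervalIntegral.integral_of_le hle, intervalIntegral.integral_const_mul,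
        integral_inv_of_pos (by linarith) ht]
      congr 1
      rw [div_div_eq_mul_div, mul_comm, mul_div_assoc, div_self ht.ne', mul_one]
    calc ε * Real.log 2 = ∫ s in S n, ε * s⁻¹ := hcalc.symm
      _ ≤ ∫ s in S n, f s := setIntegral_mono_on hint2 hint1 measurableSet_Ioc hpt
  -- pairwise disjoint
  have hdisj : ∀ m n : ℕ, m ≠ n → Disjoint (S m) (S n) := by
    have aux : ∀ m n : ℕ, m < n → Disjoint (S m) (S n) := by
      intro m n h
      apply Set.disjoint_left.mpr
      intro x hx1 hx2
      have := hlt m n h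
      have h1 : T m / 2 < x := hx1.1
      have h2 : x ≤ T n := hx2.2
      linarith
    intro m n h
    rcases h.lt_or_gt with h | h
    · exact aux m n h
    · exact (aux n m h).symm
  -- summation and contradiction
  have hεlog : 0 < ε * Real.log 2 := mul_pos hεpos (Real.log_pos one_lt_two)
  obtain ⟨N, hN⟩ := exists_nat_gt ((∫ s in Ioo (0:ℝ) 1, f s) / (ε * Real.log 2))
  have hC : (∫ s in Ioo (0:ℝ) 1, f s) < N * (ε * Real.log 2) := by
    rwa [div_lt_iff₀ hεlog] at hN
  have hUnion : ∫ s in ⋃ n ∈ Finset.range N, S n, f s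
      = ∑ n ∈ Finset.range N, ∫ s in S n, f s := by
    apply integral_biUnion_finset
    · exact fun i _ => measurableSet_Ioc
    · exact fun i _ j _ hij => hdisj i j hij
    · exact fun i _ => hI.mono_set (hsub i)
  have hfnn : 0 ≤ᵐ[volume.restrict (Ioo (0:ℝ) 1)] f := by
    rw [EventuallyLE, ae_restrict_iff' measurableSet_Ioo]
    apply ae_of_all
    intro s hs
    have : 0 < s * (1 - s) := by nlinarith [hs.1, hs.2]
    simp only [hfdef, Pi.zero_apply]
    positivity
  have hmono_int : ∫ s in ⋃ n ∈ Finset.range N, S n, f s ≤ ∫ s in Ioo (0:ℝ) 1, f s := by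
    apply setIntegral_mono_set hI hfnn
    apply HasSubset.Subset.eventuallyLE
    exact Set.iUnion₂_subset fun i _ => hsub i
  have hsum : (N : ℝ) * (ε * Real.log 2) ≤ ∑ n ∈ Finset.range N, ∫ s in S n, f s := by
    calc (N : ℝ) * (ε * Real.log 2) = ∑ _n ∈ Finset.range N, ε * Real.log 2 := by
          rw [Finset.sum_const, Finset.card_range, nsmul_eq_mul]
      _ ≤ _ := Finset.sum_le_sum fun i _ => key2 i
  rw [← hUnion] at hsum
  linarith
end

section
/- Let α₀∈ℝ, α≥0, β∈[0,1), let Y:ℤ→[0,∞), and let X:ℤ→ℝ be a bounded function satisfying the recursion X_t = α₀ + α·Y_{t−1} + β·X_{t−1} for all t∈ℤ. Then for every t∈ℤ the series Σ_{k=0}^∞ β^k·α·Y_{t−1−k} converges and X_t = α₀/(1−β) + α·Σ_{k=0}^∞ β^k·Y_{t−1−k}. -/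
/-- In the INGARCH(1,1) model, if the conditional mean process `X` is bounded and
satisfies `X_t = α₀ + α Y_{t−1} + β X_{t−1}` for all `t ∈ ℤ`, then the series
`Σ_k β^k α Y_{t−1−k}` converges and `X_t = α₀/(1−β) + α Σ_k β^k Y_{t−1−k}`. -/
theorem ingarch_infinite_past_representation
    (α₀ α β : ℝ) (hα : 0 ≤ α) (hβ0 : 0 ≤ β) (hβ1 : β < 1)
    (Y : ℤ → ℝ) (hY : ∀ t, 0 ≤ Y t)
    (X : ℤ → ℝ) (hXbdd : ∃ M : ℝ, ∀ t, |X t| ≤ M)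
    (hrec : ∀ t : ℤ, X t = α₀ + α * Y (t - 1) + β * X (t - 1)) :
    ∀ t : ℤ,
      Summable (fun k : ℕ => β ^ k * (α * Y (t - 1 - (k : ℤ)))) ∧
      X t = α₀ / (1 - β) + α * ∑' k : ℕ, β ^ k * Y (t - 1 - (k : ℤ)) := by
  obtain ⟨M, hM⟩ := hXbdd
  have hM0 : 0 ≤ M := le_trans (abs_nonneg _) (hM 0)
  have h1β : 0 < 1 - β := by linarith
  intro t
  set f : ℕ → ℝ := fun k => β ^ k * (α * Y (t - 1 - (k : ℤ))) with hf
  -- key recursion unfolding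
  have key : ∀ n : ℕ, X t = (∑ k ∈ Finset.range n, β ^ k * (α₀ + α * Y (t - 1 - (k : ℤ))))
      + β ^ n * X (t - (n : ℤ)) := by
    intro n
    induction n with
    | zero => simp
    | succ n ih =>
      rw [Finset.sum_range_succ]
      have h := hrec (t - (n : ℤ))
      have e1 : t - (n : ℤ) - 1 = t - 1 - (n : ℤ) := by ring
      have e2 : t - ((n : ℕ) + 1 : ℕ) = t - (n : ℤ) - 1 := by push_cast; ring
      rw [e2, ih, h, e1]
      ring
  -- geometric sums
  have hgsum : HasSum (fun n : ℕ => β ^ n) (1 - β)⁻¹ :=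
    hasSum_geometric_of_lt_one hβ0 hβ1
  have hs_le : ∀ n : ℕ, ∑ k ∈ Finset.range n, β ^ k ≤ (1 - β)⁻¹ := fun n =>
    sum_le_hasSum (Finset.range n) (fun i _ => pow_nonneg hβ0 i) hgsum
  have hs_nonneg : ∀ n : ℕ, (0:ℝ) ≤ ∑ k ∈ Finset.range n, β ^ k :=
    fun n => Finset.sum_nonneg fun k _ => pow_nonneg hβ0 k
  -- split the sums in key
  have split : ∀ n : ℕ, (∑ k ∈ Finset.range n, β ^ k * (α₀ + α * Y (t - 1 - (k : ℤ))))
      = α₀ * (∑ k ∈ Finset.range n, β ^ k) + ∑ k ∈ Finset.range n, f k := by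
    intro n
    rw [Finset.mul_sum, ← Finset.sum_add_distrib]
    exact Finset.sum_congr rfl fun k _ => by simp [hf]; ring
  -- summability
  have hfsum : Summable f := by
    apply summable_of_sum_range_le (c := M + M + |α₀| * (1 - β)⁻¹)
    · intro k
      exact mul_nonneg (pow_nonneg hβ0 k) (mul_nonneg hα (hY _))
    · intro n
      have hk := key n
      rw [split n] at hk
      have h1 : |X t| ≤ M := hM t
      have h2 : |β ^ n * X (t - (n : ℤ))| ≤ M := by
        rw [abs_mul, abs_pow, abs_of_nonneg hβ0]
        calc β ^ n * |X (t - (n : ℤ))| ≤ 1 * M := by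
              apply mul_le_mul (pow_le_one₀ hβ0 hβ1.le) (hM _) (abs_nonneg _) zero_le_one
          _ = M := one_mul M
      have h3 : |α₀ * (∑ k ∈ Finset.range n, β ^ k)| ≤ |α₀| * (1 - β)⁻¹ := by
        rw [abs_mul, abs_of_nonneg (hs_nonneg n)]
        exact mul_le_mul_of_nonneg_left (hs_le n) (abs_nonneg _)
      have := abs_le.mp h1
      have := abs_le.mp h2
      have := abs_le.mp h3
      linarith
  -- limits
  have hb : Filter.Tendsto (fun n : ℕ => β ^ n * X (t - (n : ℤ))) Filter.atTop (nhds 0) := by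
    have hg : Filter.Tendsto (fun n : ℕ => M * β ^ n) Filter.atTop (nhds 0) := by
      simpa using (tendsto_pow_atTop_nhds_zero_of_lt_one hβ0 hβ1).const_mul M
    refine squeeze_zero_norm (fun n => ?_) hg
    rw [Real.norm_eq_abs, abs_mul, abs_pow, abs_of_nonneg hβ0, mul_comm]
    exact mul_le_mul_of_nonneg_right (hM _) (pow_nonneg hβ0 n)
  have hs : Filter.Tendsto (fun n : ℕ => ∑ k ∈ Finset.range n, β ^ k) Filter.atTop
      (nhds (1 - β)⁻¹) := hgsum.tendsto_sum_nat
  -- partial sums of f tend to X t - α₀/(1-β)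
  have hP : Filter.Tendsto (fun n : ℕ => ∑ k ∈ Finset.range n, f k) Filter.atTop
      (nhds (X t - α₀ * (1 - β)⁻¹)) := by
    have hEq : (fun n : ℕ => ∑ k ∈ Finset.range n, f k)
        = fun n => X t - α₀ * (∑ k ∈ Finset.range n, β ^ k) - β ^ n * X (t - (n : ℤ)) := by
      funext n
      have hk := key n
      rw [split n] at hk
      linarith
    rw [hEq]
    have h1 : Filter.Tendsto
        (fun n : ℕ => X t - α₀ * (∑ k ∈ Finset.range n, β ^ k) - β ^ n * X (t - (n : ℤ)))
        Filter.atTop (nhds (X t - α₀ * (1 - β)⁻¹ - 0)) :=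
      (tendsto_const_nhds.sub (hs.const_mul α₀)).sub hb
    simpa using h1
  have htsum : ∑' k, f k = X t - α₀ * (1 - β)⁻¹ :=
    tendsto_nhds_unique hfsum.hasSum.tendsto_sum_nat hP
  refine ⟨hfsum, ?_⟩
  have : α * ∑' k : ℕ, β ^ k * Y (t - 1 - (k : ℤ)) = ∑' k, f k := by
    rw [← tsum_mul_left]
    congr 1; funext k; simp [hf]; ring
  rw [this, htsum, div_eq_mul_inv]
  ring
end

section
/- Let α₁, α₂, β ≥ 0 and ℓ ≥ 0. Then for all x, x', y, y' ≥ 0, |(α₁·max(y−ℓ,0) + α₂·min(y,ℓ) + β·x) − (α₁·max(y'−ℓ,0) + α₂·min(y',ℓ) + β·x')| ≤ β·|x−x'| + max(α₁,α₂)·|y−y'|. In particular, if max(α₁,α₂)+β < 1, the threshold regression function f_θ(x,y) = α₀ + α₁·max(y−ℓ,0) + α₂·min(y,ℓ) + β·x satisfies the contraction condition with δ₁ = β and δ₂ = max(α₁,α₂), δ₁+δ₂ < 1. -/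
lemma threshold_aux (α₁ α₂ ℓ y y' : ℝ) (hα₁ : 0 ≤ α₁) (hα₂ : 0 ≤ α₂) :
    |α₁ * (max (y - ℓ) 0 - max (y' - ℓ) 0) + α₂ * (min y ℓ - min y' ℓ)|
      ≤ max α₁ α₂ * |y - y'| := by
  set a := max (y - ℓ) 0 - max (y' - ℓ) 0 with ha
  set b := min y ℓ - min y' ℓ with hb
  have hsum : a + b = y - y' := by
    have h1 : max (y - ℓ) 0 + min y ℓ = y := by
      rcases le_total y ℓ with h | h
      · rw [max_eq_right (by linarith), min_eq_left h]; ring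
      · rw [max_eq_left (by linarith), min_eq_right h]; ring
    have h2 : max (y' - ℓ) 0 + min y' ℓ = y' := by
      rcases le_total y' ℓ with h | h
      · rw [max_eq_right (by linarith), min_eq_left h]; ring
      · rw [max_eq_left (by linarith), min_eq_right h]; ring
    rw [ha, hb]; linarith
  have habs : |a| + |b| = |y - y'| := by
    rcases le_total y y' with h | h
    · have haa : a ≤ 0 := by
        have := max_le_max (sub_le_sub_right h ℓ) (le_refl (0:ℝ))
        simpa [ha, sub_nonpos] using this
      have hbb : b ≤ 0 := by
        have := min_le_min h (le_refl ℓ)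
        simpa [hb, sub_nonpos] using this
      rw [abs_of_nonpos haa, abs_of_nonpos hbb, abs_of_nonpos (by linarith : y - y' ≤ 0)]
      linarith
    · have haa : 0 ≤ a := by
        have := max_le_max (sub_le_sub_right h ℓ) (le_refl (0:ℝ))
        simpa [ha, sub_nonneg] using this
      have hbb : 0 ≤ b := by
        have := min_le_min h (le_refl ℓ)
        simpa [hb, sub_nonneg] using this
      rw [abs_of_nonneg haa, abs_of_nonneg hbb, abs_of_nonneg (by linarith : 0 ≤ y - y')]
      linarith
  calc |α₁ * a + α₂ * b| ≤ |α₁ * a| + |α₂ * b| := abs_add_le _ _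
    _ = α₁ * |a| + α₂ * |b| := by
        rw [abs_mul, abs_mul, abs_of_nonneg hα₁, abs_of_nonneg hα₂]
    _ ≤ max α₁ α₂ * |a| + max α₁ α₂ * |b| := by
        gcongr <;> [exact le_max_left _ _; exact le_max_right _ _]
    _ = max α₁ α₂ * (|a| + |b|) := by ring
    _ = max α₁ α₂ * |y - y'| := by rw [habs]

/-- The threshold regression function satisfies the Lipschitz bound
`|(α₁ max(y−ℓ,0) + α₂ min(y,ℓ) + βx) − (α₁ max(y'−ℓ,0) + α₂ min(y',ℓ) + βx')|
  ≤ β|x−x'| + max(α₁,α₂)|y−y'|`; in particular, if `max(α₁,α₂)+β < 1`, then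
`f_θ(x,y) = α₀ + α₁ max(y−ℓ,0) + α₂ min(y,ℓ) + βx` satisfies the contraction
condition (A(Θ)) with `δ₁ = β`, `δ₂ = max(α₁,α₂)` and `δ₁ + δ₂ < 1`. -/
theorem threshold_contraction (α₁ α₂ β ℓ : ℝ)
    (hα₁ : 0 ≤ α₁) (hα₂ : 0 ≤ α₂) (hβ : 0 ≤ β) (hℓ : 0 ≤ ℓ) :
    (∀ x x' y y' : ℝ, 0 ≤ x → 0 ≤ x' → 0 ≤ y → 0 ≤ y' →
      |(α₁ * max (y - ℓ) 0 + α₂ * min y ℓ + β * x)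
          - (α₁ * max (y' - ℓ) 0 + α₂ * min y' ℓ + β * x')|
        ≤ β * |x - x'| + max α₁ α₂ * |y - y'|) ∧
    (max α₁ α₂ + β < 1 →
      ∀ α₀ x x' y y' : ℝ, 0 ≤ x → 0 ≤ x' → 0 ≤ y → 0 ≤ y' →
        |(α₀ + α₁ * max (y - ℓ) 0 + α₂ * min y ℓ + β * x)
            - (α₀ + α₁ * max (y' - ℓ) 0 + α₂ * min y' ℓ + β * x')|
          ≤ β * |x - x'| + max α₁ α₂ * |y - y'| ∧ β + max α₁ α₂ < 1) := by
  have key : ∀ x x' y y' : ℝ,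
      |(α₁ * max (y - ℓ) 0 + α₂ * min y ℓ + β * x)
          - (α₁ * max (y' - ℓ) 0 + α₂ * min y' ℓ + β * x')|
        ≤ β * |x - x'| + max α₁ α₂ * |y - y'| := by
    intro x x' y y'
    have h1 := threshold_aux α₁ α₂ ℓ y y' hα₁ hα₂
    have h2 : |β * (x - x')| = β * |x - x'| := by
      rw [abs_mul, abs_of_nonneg hβ]
    calc |(α₁ * max (y - ℓ) 0 + α₂ * min y ℓ + β * x)
          - (α₁ * max (y' - ℓ) 0 + α₂ * min y' ℓ + β * x')|
        = |(α₁ * (max (y - ℓ) 0 - max (y' - ℓ) 0) + α₂ * (min y ℓ - min y' ℓ))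
            + β * (x - x')| := by ring_nf
      _ ≤ |α₁ * (max (y - ℓ) 0 - max (y' - ℓ) 0) + α₂ * (min y ℓ - min y' ℓ)|
            + |β * (x - x')| := abs_add_le _ _
      _ ≤ max α₁ α₂ * |y - y'| + β * |x - x'| := by rw [h2]; linarith
      _ = β * |x - x'| + max α₁ α₂ * |y - y'| := by ring
  refine ⟨fun x x' y y' _ _ _ _ => key x x' y y', fun hlt α₀ x x' y y' _ _ _ _ => ⟨?_, by linarith⟩⟩
  have := key x x' y y'
  calc |(α₀ + α₁ * max (y - ℓ) 0 + α₂ * min y ℓ + β * x)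
        - (α₀ + α₁ * max (y' - ℓ) 0 + α₂ * min y' ℓ + β * x')|
      = |(α₁ * max (y - ℓ) 0 + α₂ * min y ℓ + β * x)
        - (α₁ * max (y' - ℓ) 0 + α₂ * min y' ℓ + β * x')| := by ring_nf
    _ ≤ _ := this
end
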